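/- Let S be a set of n distinct real numbers, and let Π ⊆ S be obtained by including each element independently with probability q = 1/log n. Sort Π and take every (log² n)-th element as a pivot. Then, except with probability negligible in n, the number of elements of S lying strictly between two consecutive pivots is at most log³ n + o(log³ n). Formally: for any t ≥ (1+ε)·log³ n with constant ε > 0, the probability that some interval between consecutive pivots contains more than t elements of S is at most n·exp(−Ω(ε²·log³ n·q)) = n·exp(−Ω(ε²·log² n)). -/

import Mathlib

open scoped Classical

/-- The list of pivots: every `K`-th element of the sorted sample `P`. -/
noncomputable def pivotList (P : Finset ℝ) (K : ℕ) : List ℝ :=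
  (List.range ((P.sort (· ≤ ·)).length / K)).map
    (fun j => (P.sort (· ≤ ·)).getD (j * K) 0)

/-- The bad event: some pair of consecutive pivots has more than `t` elements of
`S` strictly between them. -/
noncomputable def badPivot (S P : Finset ℝ) (K : ℕ) (t : ℝ) : Prop :=
  ∃ j : ℕ, j + 1 < (pivotList P K).length ∧
    t < ((S.filter (fun x =>
        (pivotList P K).getD j 0 < x ∧ x < (pivotList P K).getD (j + 1) 0)).card : ℝ)

lemma mgf_sum (S I : Finset ℝ) (hI : I ⊆ S) (q θ : ℝ) :
    ∑ P ∈ S.powerset, q ^ P.card * (1 - q) ^ (S.card - P.card) * θ ^ (P ∩ I).card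
      = (q * θ + (1 - q)) ^ I.card := by
  have h := Finset.prod_add (fun x => q * (if x ∈ I then θ else 1)) (fun _ => 1 - q) S
  have hL : ∏ x ∈ S, (q * (if x ∈ I then θ else 1) + (1 - q))
      = (q * θ + (1 - q)) ^ I.card := by
    rw [Finset.prod_congr rfl (g := fun x => if x ∈ I then q * θ + (1 - q) else 1)
      (fun x _ => by by_cases hx : x ∈ I <;> simp [hx] <;> ring)]
    rw [Finset.prod_ite_mem, Finset.inter_eq_right.mpr hI, Finset.prod_const]
  rw [hL] at h
  rw [h]
  apply Finset.sum_congr rfl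
  intro P hP
  rw [Finset.mem_powerset] at hP
  rw [Finset.prod_mul_distrib, Finset.prod_const, Finset.prod_ite_mem,
      Finset.prod_const, Finset.prod_const, Finset.card_sdiff_of_subset hP]
  ring

lemma event_sum_le (S I : Finset ℝ) (hI : I ⊆ S) (q θ : ℝ) (hq0 : 0 ≤ q) (hq1 : q ≤ 1)
    (hθ0 : 0 < θ) (hθ1 : θ ≤ 1) (K : ℕ) :
    ∑ P ∈ S.powerset.filter (fun P => (P ∩ I).card < K),
        q ^ P.card * (1 - q) ^ (S.card - P.card)
      ≤ θ⁻¹ ^ (K - 1) * (q * θ + (1 - q)) ^ I.card := by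
  rw [← mgf_sum S I hI q θ, Finset.mul_sum]
  have hw : ∀ P : Finset ℝ, 0 ≤ q ^ P.card * (1 - q) ^ (S.card - P.card) :=
    fun P => mul_nonneg (pow_nonneg hq0 _) (pow_nonneg (by linarith) _)
  calc ∑ P ∈ S.powerset.filter (fun P => (P ∩ I).card < K),
        q ^ P.card * (1 - q) ^ (S.card - P.card)
      ≤ ∑ P ∈ S.powerset.filter (fun P => (P ∩ I).card < K),
        θ⁻¹ ^ (K - 1) * (q ^ P.card * (1 - q) ^ (S.card - P.card) * θ ^ (P ∩ I).card) := by
        apply Finset.sum_le_sum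
        intro P hP
        rw [Finset.mem_filter] at hP
        have hc : (P ∩ I).card ≤ K - 1 := by omega
        have h2 : θ ^ (K - 1) ≤ θ ^ (P ∩ I).card := pow_le_pow_of_le_one hθ0.le hθ1 hc
        have h3 : (1 : ℝ) ≤ θ⁻¹ ^ (K - 1) * θ ^ (P ∩ I).card := by
          have h4 : θ⁻¹ ^ (K - 1) * θ ^ (K - 1) = 1 := by
            rw [← mul_pow, inv_mul_cancel₀ (ne_of_gt hθ0), one_pow]
          calc (1:ℝ) = θ⁻¹ ^ (K - 1) * θ ^ (K - 1) := h4.symm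
            _ ≤ θ⁻¹ ^ (K - 1) * θ ^ (P ∩ I).card :=
              mul_le_mul_of_nonneg_left h2 (pow_nonneg (inv_nonneg.mpr hθ0.le) _)
        calc q ^ P.card * (1 - q) ^ (S.card - P.card)
            ≤ (θ⁻¹ ^ (K - 1) * θ ^ (P ∩ I).card) * (q ^ P.card * (1 - q) ^ (S.card - P.card)) :=
              le_mul_of_one_le_left (hw P) h3
          _ = θ⁻¹ ^ (K - 1) * (q ^ P.card * (1 - q) ^ (S.card - P.card) * θ ^ (P ∩ I).card) := by
              ring
    _ ≤ ∑ P ∈ S.powerset,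
        θ⁻¹ ^ (K - 1) * (q ^ P.card * (1 - q) ^ (S.card - P.card) * θ ^ (P ∩ I).card) := by
        apply Finset.sum_le_sum_of_subset_of_nonneg (Finset.filter_subset _ _)
        intro P _ _
        exact mul_nonneg (pow_nonneg (inv_nonneg.mpr hθ0.le) _)
          (mul_nonneg (hw P) (pow_nonneg hθ0.le _))

lemma badPivot_witness (S P : Finset ℝ) (hPS : P ⊆ S) (K : ℕ) (hK : 0 < K) (t : ℝ)
    (h : badPivot S P K t) :
    ∃ a ∈ S, ∃ b ∈ S,
      t < ((S.filter (fun x => a < x ∧ x < b)).card : ℝ) ∧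
      (P ∩ S.filter (fun x => a < x ∧ x < b)).card < K := by
  obtain ⟨j, hj, ht⟩ := h
  set l := P.sort (· ≤ ·) with hl
  have hlen : (pivotList P K).length = l.length / K := by simp [pivotList, hl]
  rw [hlen] at hj
  have hjlt : (j + 1) * K < l.length := by
    have h2 : j + 2 ≤ l.length / K := hj
    have h3 := (Nat.le_div_iff_mul_le hK).mp h2
    have h4 : (j + 2) * K = (j + 1) * K + K := by ring
    omega
  have hjK : j * K < l.length := by
    have : j * K < (j + 1) * K := by
      have : j * K + K = (j + 1) * K := by ring
      omega
    omega
  have hget : ∀ i, i < l.length / K → (pivotList P K).getD i 0 = l.getD (i * K) 0 := by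
    intro i hi
    simp [pivotList, ← hl, List.getD_eq_getElem?_getD, List.getElem?_map,
      List.getElem?_range, hi]
  rw [hget j (by omega), hget (j + 1) (by omega)] at ht
  have ha : l.getD (j * K) 0 = l[j * K] := List.getD_eq_getElem l 0 hjK
  have hb : l.getD ((j + 1) * K) 0 = l[(j + 1) * K] := List.getD_eq_getElem l 0 hjlt
  have haP : l.getD (j * K) 0 ∈ P := by
    rw [ha]; exact (Finset.mem_sort _).mp (List.getElem_mem _)
  have hbP : l.getD ((j + 1) * K) 0 ∈ P := by
    rw [hb]; exact (Finset.mem_sort _).mp (List.getElem_mem _)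
  refine ⟨l.getD (j * K) 0, hPS haP, l.getD ((j + 1) * K) 0, hPS hbP, ht, ?_⟩
  have hPI : P ∩ S.filter (fun x => l.getD (j * K) 0 < x ∧ x < l.getD ((j + 1) * K) 0)
      = P.filter (fun x => l.getD (j * K) 0 < x ∧ x < l.getD ((j + 1) * K) 0) := by
    ext x
    simp only [Finset.mem_inter, Finset.mem_filter]
    exact ⟨fun ⟨h1, _, h3⟩ => ⟨h1, h3⟩, fun ⟨h1, h2⟩ => ⟨h1, hPS h1, h2⟩⟩
  rw [hPI]
  have hmono := (Finset.sortedLT_sort P).strictMono_get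
  have hsub : P.filter (fun x => l.getD (j * K) 0 < x ∧ x < l.getD ((j + 1) * K) 0)
      ⊆ (Finset.Ioo (j * K) ((j + 1) * K)).image (fun i => l.getD i 0) := by
    intro x hx
    rw [Finset.mem_filter] at hx
    obtain ⟨hxP, hax, hxb⟩ := hx
    have hxl : x ∈ l := (Finset.mem_sort _).mpr hxP
    obtain ⟨i, hi, hxi⟩ := List.mem_iff_getElem.mp hxl
    have h1 : j * K < i := by
      by_contra hcon
      push_neg at hcon
      have : l.get ⟨i, hi⟩ ≤ l.get ⟨j * K, hjK⟩ := hmono.monotone (by exact hcon)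
      simp only [List.get_eq_getElem] at this
      rw [ha] at hax
      rw [hxi] at this
      linarith
    have h2 : i < (j + 1) * K := by
      by_contra hcon
      push_neg at hcon
      have : l.get ⟨(j + 1) * K, hjlt⟩ ≤ l.get ⟨i, hi⟩ := hmono.monotone (by exact hcon)
      simp only [List.get_eq_getElem] at this
      rw [hb] at hxb
      rw [hxi] at this
      linarith
    exact Finset.mem_image.mpr ⟨i, Finset.mem_Ioo.mpr ⟨h1, h2⟩,
      by rw [List.getD_eq_getElem l 0 hi, hxi]⟩
  have hcard := Finset.card_le_card hsub
  have hcard2 := Finset.card_image_le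
    (s := Finset.Ioo (j * K) ((j + 1) * K)) (f := fun i => l.getD i 0)
  have hIoo : (Finset.Ioo (j * K) ((j + 1) * K)).card = K - 1 := by
    rw [Nat.card_Ioo]
    have : (j + 1) * K = j * K + K := by ring
    omega
  omega


set_option maxHeartbeats 1000000 in
/-- Choosing a sample `P ⊆ S` by including each of the `n` elements independently
with probability `q = 1/log n`, and taking every `(log² n)`-th element of the sorted
sample as a pivot: for any `t ≥ (1+ε)·log³ n`, the probability that some interval
between consecutive pivots contains more than `t` elements of `S` is at most
`n·exp(−Ω(ε²·log² n))`. -/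
theorem stmt_5 : ∀ ε : ℝ, 0 < ε → ∃ c : ℝ, 0 < c ∧ ∃ N : ℕ, ∀ n : ℕ, N ≤ n →
    ∀ S : Finset ℝ, S.card = n →
    ∀ t : ℝ, (1 + ε) * (Real.log n) ^ 3 ≤ t →
    (∑ P ∈ S.powerset.filter (fun P => badPivot S P ⌈(Real.log n) ^ 2⌉₊ t),
        (1 / Real.log n) ^ P.card * (1 - 1 / Real.log n) ^ (n - P.card))
      ≤ (n : ℝ) * Real.exp (-c * ε ^ 2 * (Real.log n) ^ 2) := by
  intro ε hε
  have h1ε : (0:ℝ) < 1 + ε := by linarith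
  set g : ℝ := ε - Real.log (1 + ε) with hg_def
  have hlog1ε : 0 ≤ Real.log (1 + ε) := Real.log_nonneg (by linarith)
  have hg : 0 < g := by
    have := Real.log_lt_sub_one_of_pos h1ε (by linarith)
    simp only [hg_def]; linarith
  refine ⟨g / (2 * ε ^ 2), by positivity, ⌈Real.exp (max 1 (2 / g))⌉₊ + 1, ?_⟩
  intro n hn S hS t ht
  subst hS
  set n := S.card with hn_def
  set L := Real.log n with hL_def
  have hnR : Real.exp (max 1 (2 / g)) ≤ (n : ℝ) := by
    have h1 : (⌈Real.exp (max 1 (2 / g))⌉₊ : ℝ) ≤ (n : ℝ) := by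
      exact_mod_cast le_trans (Nat.le_succ _) hn
    exact le_trans (Nat.le_ceil _) h1
  have hLmax : max 1 (2 / g) ≤ L := by
    rw [hL_def, ← Real.log_exp (max 1 (2 / g))]
    exact Real.log_le_log (Real.exp_pos _) hnR
  have hL1 : (1:ℝ) ≤ L := le_trans (le_max_left _ _) hLmax
  have hL2g : 2 / g ≤ L := le_trans (le_max_right _ _) hLmax
  have hL0 : (0:ℝ) < L := lt_of_lt_of_le one_pos hL1
  set q : ℝ := 1 / L with hq_def
  have hq0 : 0 ≤ q := by positivity
  have hq1 : q ≤ 1 := by rw [hq_def]; rw [div_le_one hL0]; exact hL1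
  set K : ℕ := ⌈L ^ 2⌉₊ with hK_def
  have hK1 : 0 < K := Nat.ceil_pos.mpr (by nlinarith)
  set θ : ℝ := (1 + ε)⁻¹ with hθ_def
  have hθ0 : 0 < θ := by positivity
  have hθ1 : θ ≤ 1 := by
    rw [hθ_def]
    rw [inv_le_one_iff₀]
    right; linarith
  -- per-pair bound
  set w : Finset ℝ → ℝ := fun P => q ^ P.card * (1 - q) ^ (n - P.card) with hw_def
  have hwnn : ∀ P : Finset ℝ, 0 ≤ w P :=
    fun P => mul_nonneg (pow_nonneg hq0 _) (pow_nonneg (by linarith) _)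
  set e : ℝ → ℝ → Finset ℝ → Prop := fun a b P =>
    t < ((S.filter (fun x => a < x ∧ x < b)).card : ℝ) ∧
    (P ∩ S.filter (fun x => a < x ∧ x < b)).card < K with he_def
  set B : ℝ := Real.exp (-(g * L ^ 2)) with hB_def
  have hpair : ∀ a b : ℝ, (∑ P ∈ S.powerset.filter (e a b), w P) ≤ B := by
    intro a b
    by_cases hc : t < ((S.filter (fun x => a < x ∧ x < b)).card : ℝ)
    · set I : Finset ℝ := S.filter (fun x => a < x ∧ x < b) with hI_def
      have hIS : I ⊆ S := Finset.filter_subset _ _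
      have hef : S.powerset.filter (e a b) = S.powerset.filter (fun P => (P ∩ I).card < K) := by
        apply Finset.filter_congr
        intro P _
        simp only [he_def, ← hI_def]
        exact ⟨fun h => h.2, fun h => ⟨hc, h⟩⟩
      rw [hef]
      have hstep := event_sum_le S I hIS q θ hq0 hq1 hθ0 hθ1 K
      refine le_trans hstep ?_
      set m : ℕ := I.card with hm_def
      have hm : t < (m : ℝ) := hc
      have htm : (1 + ε) * L ^ 3 ≤ (m : ℝ) := le_trans ht (le_of_lt hm)
      -- analytic bound
      have hbase : 0 ≤ q * θ + (1 - q) := by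
        have : 0 ≤ q * θ := mul_nonneg hq0 hθ0.le
        linarith
      have hbaseexp : q * θ + (1 - q) ≤ Real.exp (-(q * (1 - θ))) := by
        have h5 := Real.add_one_le_exp (-(q * (1 - θ)))
        have : q * θ + (1 - q) = -(q * (1 - θ)) + 1 := by ring
        linarith
      have hpow : (q * θ + (1 - q)) ^ m ≤ Real.exp (-(q * (1 - θ))) ^ m :=
        pow_le_pow_left₀ hbase hbaseexp m
      have hinv : θ⁻¹ = 1 + ε := by rw [hθ_def, inv_inv]
      have hA : θ⁻¹ ^ (K - 1) = Real.exp (((K - 1 : ℕ) : ℝ) * Real.log (1 + ε)) := by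
        rw [hinv, Real.exp_nat_mul, Real.exp_log h1ε]
      rw [hA]
      have hexp2 : Real.exp (-(q * (1 - θ))) ^ m = Real.exp ((m : ℝ) * (-(q * (1 - θ)))) := by
        rw [Real.exp_nat_mul]
      have hchain : Real.exp (((K - 1 : ℕ) : ℝ) * Real.log (1 + ε)) * (q * θ + (1 - q)) ^ m
          ≤ Real.exp (((K - 1 : ℕ) : ℝ) * Real.log (1 + ε) + (m : ℝ) * (-(q * (1 - θ)))) := by
        rw [Real.exp_add, ← hexp2]
        exact mul_le_mul_of_nonneg_left hpow (le_of_lt (Real.exp_pos _))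
      refine le_trans hchain ?_
      rw [hB_def, Real.exp_le_exp]
      -- exponent inequality
      have hKle : ((K - 1 : ℕ) : ℝ) ≤ L ^ 2 := by
        have h6 : (K : ℝ) < L ^ 2 + 1 := Nat.ceil_lt_add_one (by positivity)
        have h7 : ((K - 1 : ℕ) : ℝ) = (K : ℝ) - 1 := by
          rw [Nat.cast_sub hK1]; simp
        linarith
      have h8 : ((K - 1 : ℕ) : ℝ) * Real.log (1 + ε) ≤ L ^ 2 * Real.log (1 + ε) :=
        mul_le_mul_of_nonneg_right hKle hlog1ε
      have hq1θ : 0 ≤ q * (1 - θ) := mul_nonneg hq0 (by linarith)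
      have h9 : (1 + ε) * L ^ 3 * (q * (1 - θ)) ≤ (m : ℝ) * (q * (1 - θ)) :=
        mul_le_mul_of_nonneg_right htm hq1θ
      have hθε : (1 + ε) * (1 - θ) = ε := by
        rw [hθ_def, mul_sub, mul_one, mul_inv_cancel₀ (ne_of_gt h1ε)]
        ring
      have hLq : L ^ 3 * q = L ^ 2 := by
        rw [hq_def, mul_one_div]
        rw [eq_comm, eq_div_iff (ne_of_gt hL0)]
        ring
      have h10 : (1 + ε) * L ^ 3 * (q * (1 - θ)) = ε * L ^ 2 := by
        calc (1 + ε) * L ^ 3 * (q * (1 - θ)) = ((1 + ε) * (1 - θ)) * (L ^ 3 * q) := by ring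
          _ = ε * L ^ 2 := by rw [hθε, hLq]
      rw [h10] at h9
      nlinarith [h8, h9]
    · have : S.powerset.filter (e a b) = ∅ := by
        apply Finset.filter_false_of_mem
        intro P _
        simp only [he_def]
        intro hcon
        exact hc hcon.1
      rw [this, Finset.sum_empty]
      exact le_of_lt (Real.exp_pos _)
  -- union bound
  have hunion : (∑ P ∈ S.powerset.filter (fun P => badPivot S P K t), w P)
      ≤ ∑ ab ∈ S ×ˢ S, ∑ P ∈ S.powerset.filter (e ab.1 ab.2), w P := by
    calc (∑ P ∈ S.powerset.filter (fun P => badPivot S P K t), w P)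
        ≤ ∑ P ∈ S.powerset.filter (fun P => badPivot S P K t),
            ∑ ab ∈ S ×ˢ S, (if e ab.1 ab.2 P then w P else 0) := by
          apply Finset.sum_le_sum
          intro P hP
          rw [Finset.mem_filter, Finset.mem_powerset] at hP
          obtain ⟨hPS, hbad⟩ := hP
          obtain ⟨a, haS, b, hbS, h1, h2⟩ := badPivot_witness S P hPS K hK1 t hbad
          have hmem : (a, b) ∈ S ×ˢ S := Finset.mem_product.mpr ⟨haS, hbS⟩
          have hne : ∀ ab : ℝ × ℝ, ab ∈ S ×ˢ S → 0 ≤ if e ab.1 ab.2 P then w P else 0 := by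
            intro ab _
            split_ifs
            exacts [hwnn P, le_refl 0]
          have hsingle := Finset.single_le_sum
            (f := fun ab : ℝ × ℝ => if e ab.1 ab.2 P then w P else 0) hne hmem
          exact le_trans (le_of_eq (if_pos (show e a b P from ⟨h1, h2⟩)).symm) hsingle
      _ ≤ ∑ P ∈ S.powerset, ∑ ab ∈ S ×ˢ S, (if e ab.1 ab.2 P then w P else 0) := by
          apply Finset.sum_le_sum_of_subset_of_nonneg (Finset.filter_subset _ _)
          intro P _ _
          apply Finset.sum_nonneg
          intro ab _
          split_ifs
          exacts [hwnn P, le_refl 0]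
      _ = ∑ ab ∈ S ×ˢ S, ∑ P ∈ S.powerset, (if e ab.1 ab.2 P then w P else 0) :=
          Finset.sum_comm
      _ = ∑ ab ∈ S ×ˢ S, ∑ P ∈ S.powerset.filter (e ab.1 ab.2), w P := by
          apply Finset.sum_congr rfl
          intro ab _
          rw [Finset.sum_filter]
  have hfinal : (∑ P ∈ S.powerset.filter (fun P => badPivot S P K t), w P)
      ≤ (n : ℝ) ^ 2 * B := by
    refine le_trans hunion (le_trans (Finset.sum_le_sum (fun ab _ => hpair ab.1 ab.2)) ?_)
    rw [Finset.sum_const, Finset.card_product, nsmul_eq_mul]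
    push_cast
    ring_nf
    exact le_of_eq (mul_comm _ _)
  refine le_trans hfinal ?_
  -- n^2 * B ≤ n * exp(-c ε² L²)
  have hcε : g / (2 * ε ^ 2) * ε ^ 2 = g / 2 := by field_simp
  have hexpeq : -(g / (2 * ε ^ 2)) * ε ^ 2 * L ^ 2 = -(g / 2 * L ^ 2) := by
    field_simp
  have hn0 : (0:ℝ) < (n : ℝ) := by
    have : 0 < n := by omega
    exact_mod_cast this
  have hnlog : (n : ℝ) = Real.exp L := (Real.exp_log hn0).symm
  have hkey : (n : ℝ) * B ≤ Real.exp (-(g / 2 * L ^ 2)) := by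
    rw [hB_def, hnlog, ← Real.exp_add, Real.exp_le_exp]
    have : 2 / g * L ≤ L * L := mul_le_mul_of_nonneg_right hL2g hL0.le
    have h11 : 2 * L ≤ g * (L * L) := by
      rw [div_mul_eq_mul_div, div_le_iff₀ hg] at this
      nlinarith [this]
    nlinarith [h11]
  calc (n : ℝ) ^ 2 * B = (n : ℝ) * ((n : ℝ) * B) := by ring
    _ ≤ (n : ℝ) * Real.exp (-(g / 2 * L ^ 2)) :=
        mul_le_mul_of_nonneg_left hkey hn0.le
    _ = (n : ℝ) * Real.exp (-(g / (2 * ε ^ 2)) * ε ^ 2 * L ^ 2) := by rw [hexpeq]
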